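/- Let p ∈ [1, ∞), let H be an open affine half-space in ℝ^N, let Ω ⊊ ℝ^N be a nonempty open set satisfying Ω = Ω_H, and let f : Ω → ℝ be a nonnegative measurable function with f ∈ L^p(Ω). Then the polarization f_H (defined on Ω via the zero extension of f) belongs to L^p(Ω) and ‖f_H‖_{L^p(Ω)} = ‖f‖_{L^p(Ω)}. -/

import Mathlib

open MeasureTheory
open scoped RealInnerProductSpace ENNReal

/-- Reflection of `ℝ^N` across the hyperplane `{x : ⟪x, u⟫ = c}` (for a unit vector `u`). -/
noncomputable def reflHyp {N : ℕ} (u : EuclideanSpace ℝ (Fin N)) (c : ℝ)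
    (x : EuclideanSpace ℝ (Fin N)) : EuclideanSpace ℝ (Fin N) :=
  x - (2 * (⟪x, u⟫ - c)) • u

/-- The open affine half-space `{x : ⟪x, u⟫ < c}`. -/
def halfSpace {N : ℕ} (u : EuclideanSpace ℝ (Fin N)) (c : ℝ) :
    Set (EuclideanSpace ℝ (Fin N)) :=
  {x | ⟪x, u⟫ < c}

/-- Polarization of a set `Ω` with respect to the half-space `H = halfSpace u c`:
`Ω_H = ((Ω ∪ σ_H(Ω)) ∩ H) ∪ (Ω ∩ σ_H(Ω))`. -/
noncomputable def polSet {N : ℕ} (u : EuclideanSpace ℝ (Fin N)) (c : ℝ)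
    (Ω : Set (EuclideanSpace ℝ (Fin N))) : Set (EuclideanSpace ℝ (Fin N)) :=
  ((Ω ∪ reflHyp u c '' Ω) ∩ halfSpace u c) ∪ (Ω ∩ reflHyp u c '' Ω)

/-- Polarization of a function `f : ℝ^N → ℝ` with respect to `H = halfSpace u c`:
`f_H(x) = max (f x) (f (σ_H x))` if `x ∈ H`, and `f_H(x) = min (f x) (f (σ_H x))` otherwise. -/
noncomputable def polFun {N : ℕ} (u : EuclideanSpace ℝ (Fin N)) (c : ℝ)
    (f : EuclideanSpace ℝ (Fin N) → ℝ) (x : EuclideanSpace ℝ (Fin N)) : ℝ :=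
  if ⟪x, u⟫ < c then max (f x) (f (reflHyp u c x))
  else min (f x) (f (reflHyp u c x))


section Aux

variable {N : ℕ} {u : EuclideanSpace ℝ (Fin N)} {c : ℝ}

lemma inner_reflHyp (hu : ‖u‖ = 1) (x : EuclideanSpace ℝ (Fin N)) :
    ⟪reflHyp u c x, u⟫ = 2 * c - ⟪x, u⟫ := by
  have huu : ⟪u, u⟫ = 1 := by
    rw [real_inner_self_eq_norm_sq, hu]; norm_num
  simp only [reflHyp, inner_sub_left, real_inner_smul_left, huu]
  ring

lemma reflHyp_invol (hu : ‖u‖ = 1) (x : EuclideanSpace ℝ (Fin N)) :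
    reflHyp u c (reflHyp u c x) = x := by
  conv_lhs => rw [show reflHyp u c (reflHyp u c x)
    = reflHyp u c x - (2 * (⟪reflHyp u c x, u⟫ - c)) • u from rfl, inner_reflHyp hu]
  simp only [reflHyp]
  rw [sub_sub, ← add_smul]
  have : 2 * (⟪x, u⟫ - c) + 2 * (2 * c - ⟪x, u⟫ - c) = 0 := by ring
  rw [this, zero_smul, sub_zero]

lemma reflHyp_continuous : Continuous (reflHyp u c) := by
  unfold reflHyp
  fun_prop

lemma reflHyp_measurePreserving (hu : ‖u‖ = 1) :
    MeasurePreserving (reflHyp u c) volume volume := by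
  have h1 : MeasurePreserving (Submodule.reflection ((ℝ ∙ u)ᗮ) :
      EuclideanSpace ℝ (Fin N) → EuclideanSpace ℝ (Fin N)) volume volume :=
    (Submodule.reflection ((ℝ ∙ u)ᗮ)).measurePreserving
  have h2 := measurePreserving_add_right (volume : Measure (EuclideanSpace ℝ (Fin N)))
    ((2 * c) • u)
  have h3 := h2.comp h1
  convert h3 using 1
  funext x
  show reflHyp u c x = Submodule.reflection ((ℝ ∙ u)ᗮ) x + (2 * c) • u
  rw [Submodule.reflection_orthogonal_apply, Submodule.reflection_apply,
    Submodule.starProjection_unit_singleton ℝ hu]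
  simp only [reflHyp, two_smul, smul_smul]
  rw [real_inner_comm x u]
  module

lemma polFun_measurable {g : EuclideanSpace ℝ (Fin N) → ℝ} (hg : Measurable g) :
    Measurable (polFun u c g) := by
  have hin : Measurable fun x : EuclideanSpace ℝ (Fin N) => ⟪x, u⟫ :=
    (continuous_id.inner continuous_const).measurable
  have hσ : Measurable (reflHyp u c (N := N)) := reflHyp_continuous.measurable
  exact Measurable.ite (measurableSet_lt hin measurable_const)
    (hg.max (hg.comp hσ)) (hg.min (hg.comp hσ))

end Aux

/-- For `p ∈ [1, ∞)`, a nonempty open proper subset `Ω ⊊ ℝ^N` with `Ω = Ω_H`,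
and a nonnegative measurable `f ∈ L^p(Ω)`, the polarization `f_H` (via the zero extension)
belongs to `L^p(Ω)` with the same `L^p(Ω)` norm as `f`. -/
theorem polFun_memLp_and_eLpNorm_eq {N : ℕ} (p : ℝ≥0∞) (hp1 : 1 ≤ p) (hptop : p ≠ ⊤)
    (u : EuclideanSpace ℝ (Fin N)) (hu : ‖u‖ = 1) (c : ℝ)
    (Ω : Set (EuclideanSpace ℝ (Fin N))) (hne : Ω.Nonempty) (hopen : IsOpen Ω)
    (hproper : Ω ≠ Set.univ) (hΩ : Ω = polSet u c Ω)
    (f : EuclideanSpace ℝ (Fin N) → ℝ) (hmeas : Measurable (Ω.indicator f))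
    (hf : ∀ x ∈ Ω, 0 ≤ f x) (hfLp : MemLp f p (volume.restrict Ω)) :
    MemLp (polFun u c (Ω.indicator f)) p (volume.restrict Ω) ∧
      eLpNorm (polFun u c (Ω.indicator f)) p (volume.restrict Ω) =
        eLpNorm f p (volume.restrict Ω) := by
  classical
  set g : EuclideanSpace ℝ (Fin N) → ℝ := Ω.indicator f with hgdef
  have hp0 : p ≠ 0 := (lt_of_lt_of_le zero_lt_one hp1).ne'
  have hΩm : MeasurableSet Ω := hopen.measurableSet
  have hσinv : ∀ x, reflHyp u c (reflHyp u c x) = x := reflHyp_invol hu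
  have hσmp : MeasurePreserving (reflHyp u c) volume volume :=
    reflHyp_measurePreserving hu
  have hgnn : ∀ x, 0 ≤ g x := by
    intro x
    by_cases hx : x ∈ Ω
    · simpa [hgdef, Set.indicator_of_mem hx] using hf x hx
    · simp [hgdef, Set.indicator_of_notMem hx]
  have hmem_of_ne : ∀ x, g x ≠ 0 → x ∈ Ω := by
    intro x hx
    by_contra h
    exact hx (Set.indicator_of_notMem h f)
  have hvanish : ∀ x, x ∉ Ω → polFun u c g x = 0 := by
    intro x hx
    have hgx : g x = 0 := Set.indicator_of_notMem hx f
    unfold polFun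
    split_ifs with h
    · have hσx : g (reflHyp u c x) = 0 := by
        by_contra hne
        have hmem : reflHyp u c x ∈ Ω := hmem_of_ne _ hne
        apply hx
        rw [hΩ]
        exact Or.inl ⟨Or.inr ⟨reflHyp u c x, hmem, hσinv x⟩, h⟩
      simp [hgx, hσx]
    · rw [hgx]
      exact min_eq_left (hgnn _)
  have hpm : Measurable (polFun u c g) := polFun_measurable hmeas
  set q := p.toReal with hqdef
  set A : EuclideanSpace ℝ (Fin N) → ℝ≥0∞ := fun x => (‖polFun u c g x‖₊ : ℝ≥0∞) ^ q with hA
  set B : EuclideanSpace ℝ (Fin N) → ℝ≥0∞ := fun x => (‖g x‖₊ : ℝ≥0∞) ^ q with hB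
  have hrpow : Continuous fun y : ℝ≥0∞ => y ^ q := ENNReal.continuous_rpow_const
  have hAm : Measurable A := hrpow.measurable.comp hpm.nnnorm.coe_nnreal_ennreal
  have hBm : Measurable B := hrpow.measurable.comp hmeas.nnnorm.coe_nnreal_ennreal
  have hkey : ∀ x, ⟪x, u⟫ ≠ c → A x + A (reflHyp u c x) = B x + B (reflHyp u c x) := by
    intro x hx
    have hinner := inner_reflHyp (c := c) hu x
    rcases lt_or_gt_of_ne hx with h | h
    · have h2 : ¬ ⟪reflHyp u c x, u⟫ < c := by rw [hinner]; push_neg; linarith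
      simp only [hA, hB, polFun, if_pos h, if_neg h2, hσinv x]
      rcases le_total (g x) (g (reflHyp u c x)) with hle | hle
      · rw [max_eq_right hle, min_eq_right hle, add_comm]
      · rw [max_eq_left hle, min_eq_left hle]
    · have h1 : ¬ ⟪x, u⟫ < c := by push_neg; linarith
      have h2 : ⟪reflHyp u c x, u⟫ < c := by rw [hinner]; linarith
      simp only [hA, hB, polFun, if_neg h1, if_pos h2, hσinv x]
      rcases le_total (g x) (g (reflHyp u c x)) with hle | hle
      · rw [min_eq_left hle, max_eq_left hle]
      · rw [min_eq_right hle, max_eq_right hle, add_comm]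
  have hnull : volume {x : EuclideanSpace ℝ (Fin N) | ⟪x, u⟫ = c} = 0 := by
    have hker : volume {x : EuclideanSpace ℝ (Fin N) | ⟪x, u⟫ = 0} = 0 := by
      have hset : {x : EuclideanSpace ℝ (Fin N) | ⟪x, u⟫ = 0}
          = ((LinearMap.ker ((innerSL ℝ u : EuclideanSpace ℝ (Fin N) →L[ℝ] ℝ) : EuclideanSpace ℝ (Fin N) →ₗ[ℝ] ℝ) : Submodule ℝ (EuclideanSpace ℝ (Fin N))) : Set (EuclideanSpace ℝ (Fin N))) := by
        ext x
        simp only [Set.mem_setOf_eq, SetLike.mem_coe, LinearMap.mem_ker,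
          ContinuousLinearMap.coe_coe, innerSL_apply_apply]
        rw [real_inner_comm]
      rw [hset]
      apply Measure.addHaar_submodule
      intro htop
      have hu0 : (innerSL ℝ u) u = 0 := by
        have : u ∈ LinearMap.ker ((innerSL ℝ u : EuclideanSpace ℝ (Fin N) →L[ℝ] ℝ) : EuclideanSpace ℝ (Fin N) →ₗ[ℝ] ℝ) := htop ▸ Submodule.mem_top
        exact this
      rw [innerSL_apply_apply] at hu0
      rw [real_inner_self_eq_norm_sq, hu] at hu0
      norm_num at hu0
    have hms : MeasurableSet {x : EuclideanSpace ℝ (Fin N) | ⟪x, u⟫ = c} :=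
      (isClosed_eq (continuous_id.inner continuous_const) continuous_const).measurableSet
    have hpre := (measurePreserving_add_right
      (volume : Measure (EuclideanSpace ℝ (Fin N))) (c • u)).measure_preimage
      hms.nullMeasurableSet
    have hsets : (fun x => x + c • u) ⁻¹' {x : EuclideanSpace ℝ (Fin N) | ⟪x, u⟫ = c}
        = {x : EuclideanSpace ℝ (Fin N) | ⟪x, u⟫ = 0} := by
      have huu : ⟪u, u⟫ = 1 := by
        rw [real_inner_self_eq_norm_sq, hu]; norm_num
      ext x
      simp only [Set.mem_preimage, Set.mem_setOf_eq, inner_add_left, real_inner_smul_left, huu]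
      constructor
      · intro hh; linarith
      · intro hh; linarith
    rw [hsets, hker] at hpre
    exact hpre.symm ▸ hpre
  have hae : ∀ᵐ x ∂(volume : Measure (EuclideanSpace ℝ (Fin N))), ⟪x, u⟫ ≠ c := by
    rw [ae_iff]
    have : {x : EuclideanSpace ℝ (Fin N) | ¬ ⟪x, u⟫ ≠ c}
        = {x : EuclideanSpace ℝ (Fin N) | ⟪x, u⟫ = c} := by
      ext x; simp
    rw [this]
    exact hnull
  have hABae : (fun x => A x + A (reflHyp u c x))
      =ᵐ[volume] (fun x => B x + B (reflHyp u c x)) :=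
    hae.mono fun x hx => hkey x hx
  have hAc : ∫⁻ x, A (reflHyp u c x) = ∫⁻ x, A x := hσmp.lintegral_comp hAm
  have hBc : ∫⁻ x, B (reflHyp u c x) = ∫⁻ x, B x := hσmp.lintegral_comp hBm
  have h2AB : 2 * ∫⁻ x, A x = 2 * ∫⁻ x, B x := by
    calc 2 * ∫⁻ x, A x = (∫⁻ x, A x) + ∫⁻ x, A (reflHyp u c x) := by rw [hAc, two_mul]
      _ = ∫⁻ x, (A x + A (reflHyp u c x)) :=
          (lintegral_add_left hAm _).symm
      _ = ∫⁻ x, (B x + B (reflHyp u c x)) := lintegral_congr_ae hABae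
      _ = (∫⁻ x, B x) + ∫⁻ x, B (reflHyp u c x) := lintegral_add_left hBm _
      _ = 2 * ∫⁻ x, B x := by rw [hBc, two_mul]
  have hint : ∫⁻ x, A x = ∫⁻ x, B x :=
    (ENNReal.mul_right_inj (by norm_num) (by norm_num)).mp h2AB
  have hpind : Ω.indicator (polFun u c g) = polFun u c g := by
    refine Set.indicator_eq_self.mpr fun x hx => ?_
    by_contra hxΩ
    exact hx (hvanish x hxΩ)
  have hnorm : eLpNorm (polFun u c g) p (volume.restrict Ω) =
      eLpNorm f p (volume.restrict Ω) := by
    rw [← eLpNorm_indicator_eq_eLpNorm_restrict (f := polFun u c g) hΩm, hpind,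
      ← eLpNorm_indicator_eq_eLpNorm_restrict (f := f) hΩm,
      eLpNorm_eq_lintegral_rpow_enorm_toReal hp0 hptop,
      eLpNorm_eq_lintegral_rpow_enorm_toReal hp0 hptop]
    exact congrArg (· ^ (1 / q)) hint
  exact ⟨⟨hpm.aestronglyMeasurable, hnorm ▸ hfLp.2⟩, hnorm⟩
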